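/- Fix ε ∈ (0,1). Let Ã be a continuous linear operator on the Banach space of continuous real-valued functions on [log ε, 0] satisfying Ãh(s) = ∫_{log ε − s}^0 h(s+t) e^{t/2} dt + ∫_0^{−s} h(s+t) e^{t/2} dt for all continuous h and s ∈ [log ε, 0]. Then for every n ∈ ℕ_0 and every s ∈ [log ε, 0], Ã^{n+1}𝟏(s) = 2(1 − ε^{1/2}) (log(1/ε))^n e^{−s/2}, where 𝟏 denotes the constant function with value 1. -/

import Mathlib

open MeasureTheory

/-- For `ε ∈ (0,1)` and the operator `Ã` on `C([log ε, 0], ℝ)` given by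
`Ãh(s) = ∫_{log ε − s}^0 h(s+t) e^{t/2} dt + ∫_0^{−s} h(s+t) e^{t/2} dt`, one has
`Ã^{n+1} 𝟏 (s) = 2 (1 − ε^{1/2}) (log(1/ε))^n e^{−s/2}` for all `n` and `s`. -/
theorem iterate_of_simple_operator_on_one (ε : ℝ) (hε : ε ∈ Set.Ioo (0 : ℝ) 1)
    (A : C(Set.Icc (Real.log ε) (0 : ℝ), ℝ) →L[ℝ] C(Set.Icc (Real.log ε) (0 : ℝ), ℝ))
    (hA : ∀ (h : C(Set.Icc (Real.log ε) (0 : ℝ), ℝ)) (s : Set.Icc (Real.log ε) (0 : ℝ)),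
      A h s =
        (∫ t in (Real.log ε - s.1)..(0 : ℝ),
          h (Set.projIcc (Real.log ε) 0 (Real.log_nonpos hε.1.le hε.2.le) (s.1 + t))
            * Real.exp (t / 2))
        + ∫ t in (0 : ℝ)..(-s.1),
          h (Set.projIcc (Real.log ε) 0 (Real.log_nonpos hε.1.le hε.2.le) (s.1 + t))
            * Real.exp (t / 2)) :
    ∀ (n : ℕ) (s : Set.Icc (Real.log ε) (0 : ℝ)),
      (A ^ (n + 1)) (1 : C(Set.Icc (Real.log ε) (0 : ℝ), ℝ)) s
        = 2 * (1 - Real.sqrt ε) * Real.log (1 / ε) ^ n * Real.exp (-s.1 / 2) := by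
  have hε0 := hε.1
  have hε1 := hε.2
  have hL0 : Real.log ε ≤ 0 := Real.log_nonpos hε0.le hε1.le
  -- basic integral of exp(t/2)
  have key1 : ∀ a b : ℝ, (∫ t in a..b, Real.exp (t/2)) = 2*Real.exp (b/2) - 2*Real.exp (a/2) := by
    intro a b
    have h : ∀ x : ℝ, HasDerivAt (fun t => 2*Real.exp (t/2)) (Real.exp (x/2)) x := by
      intro x
      have h1 : HasDerivAt (fun t : ℝ => t/2) (1/2) x := (hasDerivAt_id x).div_const 2
      have h2 := (Real.hasDerivAt_exp (x/2)).comp x h1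
      have h3 := h2.const_mul 2
      exact h3.congr_deriv (by ring)
    rw [intervalIntegral.integral_eq_sub_of_hasDerivAt (fun x _ => h x)
      (by apply Continuous.intervalIntegrable; continuity)]
  have hsqrt : Real.sqrt ε = Real.exp (Real.log ε / 2) := by
    rw [Real.exp_half, Real.exp_log hε0]
  -- the eigenfunction
  set g : C(Set.Icc (Real.log ε) (0:ℝ), ℝ) :=
    ⟨fun s => Real.exp (-s.1/2), by continuity⟩ with hgdef
  have hgval : ∀ s : Set.Icc (Real.log ε) (0:ℝ), g s = Real.exp (-s.1/2) := fun s => rfl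
  -- projIcc coe on the relevant range
  have proj_coe : ∀ (s : Set.Icc (Real.log ε) (0:ℝ)) (t : ℝ),
      Real.log ε - s.1 ≤ t → t ≤ -s.1 →
      ((Set.projIcc (Real.log ε) 0 hL0 (s.1 + t) : Set.Icc (Real.log ε) (0:ℝ)) : ℝ) = s.1 + t := by
    intro s t h1 h2
    rw [Set.projIcc_of_mem hL0 ⟨by linarith, by linarith⟩]
  -- A 1
  have A1 : A 1 = (2*(1 - Real.sqrt ε)) • g := by
    ext s
    rw [hA]
    simp only [ContinuousMap.one_apply, one_mul, key1]
    have hs1 := s.2.1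
    have hs2 := s.2.2
    rw [ContinuousMap.smul_apply, hgval, smul_eq_mul, hsqrt]
    have e1 : Real.exp ((Real.log ε - s.1)/2) = Real.exp (Real.log ε / 2) * Real.exp (-s.1/2) := by
      rw [← Real.exp_add]; ring_nf
    rw [e1]
    ring
  -- A g
  have Ag : A g = (Real.log (1/ε)) • g := by
    ext s
    rw [hA]
    have hs1 := s.2.1
    have hs2 := s.2.2
    have c1 : (∫ t in (Real.log ε - s.1)..(0:ℝ),
        g (Set.projIcc (Real.log ε) 0 (Real.log_nonpos hε.1.le hε.2.le) (s.1 + t))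
          * Real.exp (t / 2)) = ∫ t in (Real.log ε - s.1)..(0:ℝ), Real.exp (-s.1/2) := by
      apply intervalIntegral.integral_congr
      intro t ht
      rw [Set.uIcc_of_le (by linarith)] at ht
      dsimp only
      rw [hgval, proj_coe s t ht.1 (by linarith [ht.2])]
      rw [← Real.exp_add]
      ring_nf
    have c2 : (∫ t in (0:ℝ)..(-s.1),
        g (Set.projIcc (Real.log ε) 0 (Real.log_nonpos hε.1.le hε.2.le) (s.1 + t))
          * Real.exp (t / 2)) = ∫ t in (0:ℝ)..(-s.1), Real.exp (-s.1/2) := by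
      apply intervalIntegral.integral_congr
      intro t ht
      rw [Set.uIcc_of_le (by linarith)] at ht
      dsimp only
      rw [hgval, proj_coe s t (by linarith [ht.1]) ht.2]
      rw [← Real.exp_add]
      ring_nf
    rw [c1, c2, intervalIntegral.integral_const, intervalIntegral.integral_const,
      ContinuousMap.smul_apply, hgval, smul_eq_mul, smul_eq_mul, smul_eq_mul,
      one_div, Real.log_inv]
    ring
  -- main claim by induction
  have claim : ∀ n : ℕ, (A ^ (n + 1)) 1 = ((2*(1 - Real.sqrt ε)) * Real.log (1/ε)^n) • g := by
    intro n
    induction n with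
    | zero => simpa using A1
    | succ n ih =>
      rw [pow_succ']
      have : (A * A ^ (n + 1)) 1 = A ((A ^ (n + 1)) 1) := rfl
      rw [this, ih, ContinuousLinearMap.map_smul, Ag, smul_smul]
      congr 1
      ring
  intro n s
  rw [claim n, ContinuousMap.smul_apply, hgval, smul_eq_mul]
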